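/- Let k ≥ 8 be an integer and let G be a finite simple graph with Δ(G) ≤ k. Suppose G contains a vertex v of degree 7 having at least six neighbors of degree at most 5. If G − v admits an incidence (k+7, 7)-coloring, then G admits an incidence (k+7, 7)-coloring. -/

import Mathlib

open SimpleGraph

/-- An incidence coloring of `G` with `n` colors, where `φ v u` is the color of the
incidence `(v, vu)` (meaningful when `G.Adj v u`): two distinct adjacent incidences
`(v, vu)` and `(w, wx)` receive distinct colors. Incidences `(v, e)` and `(w, f)` are
adjacent if `v = w`, or `e = f`, or the edge `vw` equals `e` or `f`. -/
def IsIncidenceColoring {V : Type*} (G : SimpleGraph V) {n : ℕ} (φ : V → V → Fin n) : Prop :=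
  ∀ ⦃v u w x : V⦄, G.Adj v u → G.Adj w x → (v, u) ≠ (w, x) →
    (v = w ∨ s(v, u) = s(w, x) ∨ s(v, w) = s(v, u) ∨ s(v, w) = s(w, x)) →
    φ v u ≠ φ w x

/-- `G` admits an incidence `(n, ℓ)`-coloring: an incidence coloring with `n` colors such
that for every vertex `v`, at most `ℓ` distinct colors appear on the incidences of the
form `(u, uv)` where `u` ranges over the neighbors of `v`. -/
def HasIncidenceColoring {V : Type*} (G : SimpleGraph V) (n ℓ : ℕ) : Prop :=
  ∃ φ : V → V → Fin n, IsIncidenceColoring G φ ∧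
    ∀ v : V, ({c : Fin n | ∃ u : V, G.Adj u v ∧ φ u v = c}).ncard ≤ ℓ

/-- The incidence chromatic number: the least `n` such that `G` admits an incidence
`n`-coloring. -/
noncomputable def incChromaticNumber {V : Type*} (G : SimpleGraph V) : ℕ :=
  sInf {n : ℕ | ∃ φ : V → V → Fin n, IsIncidenceColoring G φ}

/-- `mad(G) < q`: every nonempty subgraph `H` of `G` satisfies `2|E(H)| < q·|V(H)|`. -/
def MadLT {V : Type*} (G : SimpleGraph V) (q : ℝ) : Prop :=
  ∀ H : G.Subgraph, H.verts.Nonempty →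
    (2 * H.edgeSet.ncard : ℝ) < q * H.verts.ncard

lemma fin_exists_notMem {n : ℕ} (s : Finset (Fin n)) (h : s.card < n) : ∃ c, c ∉ s := by
  by_contra hc
  push_neg at hc
  have := Finset.card_le_card (fun x _ => hc x : Finset.univ ⊆ s)
  simp at this; omega

/-- seq -/
lemma seq_choice {V : Type*} [DecidableEq V] {N : ℕ}
    (out inc : V → Finset (Fin N)) :
    ∀ (l : List V) (B : Finset (Fin N)), l.Nodup →
      (∀ i ∈ l, (out i).card ≤ 4) →
      B.card + l.length + 7 ≤ N →
      ∃ c : V → Fin N,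
        (∀ i ∈ l, c i ∉ out i ∧ c i ∉ B) ∧
        l.Pairwise (fun a b => c a ≠ c b) ∧
        (∀ i ∈ l, c i ∈ inc i ∨ inc i ⊆ out i ∪ B ∪ l.toFinset.image c) := by
  intro l
  induction l with
  | nil => exact fun B _ _ _ => ⟨fun _ => ⟨0, by omega⟩, by simp, by simp, by simp⟩
  | cons i t ih =>
    intro B hnd hout hbud
    have hcard : (out i ∪ B).card < N := by
      have := Finset.card_union_le (out i) B
      have := hout i (by simp)
      simp at hbud; omega
    -- choose ci, preferring an element of inc i
    obtain ⟨ci, hci, hcipref⟩ :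
        ∃ ci, ci ∉ out i ∪ B ∧ (ci ∈ inc i ∨ inc i ⊆ out i ∪ B) := by
      by_cases hne : (inc i \ (out i ∪ B)).Nonempty
      · obtain ⟨ci, hci⟩ := hne
        simp only [Finset.mem_sdiff] at hci
        exact ⟨ci, hci.2, Or.inl hci.1⟩
      · obtain ⟨ci, hci⟩ := fin_exists_notMem _ hcard
        refine ⟨ci, hci, Or.inr ?_⟩
        intro x hx
        by_contra hxx
        exact hne ⟨x, Finset.mem_sdiff.mpr ⟨hx, hxx⟩⟩
    obtain ⟨c', hc'1, hc'2, hc'3⟩ := ih (insert ci B) (hnd.of_cons)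
      (fun j hj => hout j (by simp [hj]))
      (by have := Finset.card_insert_le ci B; simp at hbud ⊢; omega)
    have hit : i ∉ t := by simp at hnd; exact hnd.1
    refine ⟨Function.update c' i ci, ?_, ?_, ?_⟩
    · intro j hj
      rcases List.mem_cons.mp hj with rfl | hj
      · simp only [Function.update_self]
        simp only [Finset.mem_union, not_or] at hci
        exact ⟨hci.1, hci.2⟩
      · have hji : j ≠ i := fun h => hit (h ▸ hj)
        rw [Function.update_of_ne hji]
        refine ⟨(hc'1 j hj).1, fun h => (hc'1 j hj).2 (Finset.mem_insert_of_mem h)⟩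
    · rw [List.pairwise_cons]
      constructor
      · intro j hj
        have hji : j ≠ i := fun h => hit (h ▸ hj)
        rw [Function.update_self, Function.update_of_ne hji]
        intro h
        exact (hc'1 j hj).2 (h ▸ Finset.mem_insert_self ci B)
      · refine List.Pairwise.imp_of_mem ?_ hc'2
        intro a b ha hb hab
        have hai : a ≠ i := fun h => hit (h ▸ ha)
        have hbi : b ≠ i := fun h => hit (h ▸ hb)
        rwa [Function.update_of_ne hai, Function.update_of_ne hbi]
    · intro j hj
      rcases List.mem_cons.mp hj with rfl | hj
      · rcases hcipref with h | h
        · exact Or.inl (by simpa using h)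
        · refine Or.inr (fun x hx => ?_)
          have := h hx
          simp only [Finset.mem_union] at this ⊢
          tauto
      · have hji : j ≠ i := fun h => hit (h ▸ hj)
        rw [Function.update_of_ne hji]
        rcases hc'3 j hj with h | h
        · exact Or.inl h
        · refine Or.inr (fun x hx => ?_)
          have := h hx
          simp only [Finset.mem_union, Finset.mem_insert, Finset.mem_image,
            List.mem_toFinset] at this ⊢
          rcases this with (ho | (rfl | hB)) | ⟨y, hy, hyx⟩
          · tauto
          · exact Or.inr ⟨i, by simp, by simp⟩
          · tauto
          · refine Or.inr ⟨y, by simp [hy], ?_⟩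
            have hyi : y ≠ i := fun h => hit (h ▸ hy)
            rwa [Function.update_of_ne hyi]


set_option maxHeartbeats 2000000 in
theorem incidence_extend_seven_vertex_six_small {V : Type*} [Fintype V] [DecidableEq V]
    (G : SimpleGraph V) [DecidableRel G.Adj] (k : ℕ) (hk : 8 ≤ k) (hΔ : G.maxDegree ≤ k)
    (v : V) (hdv : G.degree v = 7)
    (hnb : 6 ≤ ((G.neighborFinset v).filter (fun w => G.degree w ≤ 5)).card)
    (hcol : HasIncidenceColoring (G.induce ({v}ᶜ : Set V)) (k + 7) 7) :
    HasIncidenceColoring G (k + 7) 7 := by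
  classical
  obtain ⟨φ₀, hφ₀, hℓ₀⟩ := hcol
  have hmemc : ∀ {x : V}, x ≠ v → x ∈ ({v}ᶜ : Set V) :=
    fun h => Set.mem_compl_singleton_iff.mpr h
  let old : V → V → Fin (k + 7) := fun a b =>
    if h : a ≠ v ∧ b ≠ v then φ₀ ⟨a, hmemc h.1⟩ ⟨b, hmemc h.2⟩ else ⟨0, by omega⟩
  have hold : ∀ {a b : V} (ha : a ≠ v) (hb : b ≠ v),
      old a b = φ₀ ⟨a, hmemc ha⟩ ⟨b, hmemc hb⟩ := by
    intro a b ha hb; simp [old, ha, hb]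
  let out : V → Finset (Fin (k + 7)) := fun u => ((G.neighborFinset u).erase v).image (old u)
  let inc : V → Finset (Fin (k + 7)) := fun u => ((G.neighborFinset u).erase v).image (fun x => old x u)
  -- cardinality of out
  have hcard_out : ∀ u : V, v ∈ G.neighborFinset u → (out u).card ≤ G.degree u - 1 := by
    intro u hv
    calc (out u).card ≤ ((G.neighborFinset u).erase v).card := Finset.card_image_le
    _ = G.degree u - 1 := by rw [Finset.card_erase_of_mem hv]; rfl
  have hcard_inc : ∀ u : V, v ∈ G.neighborFinset u → (inc u).card ≤ G.degree u - 1 := by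
    intro u hv
    calc (inc u).card ≤ ((G.neighborFinset u).erase v).card := Finset.card_image_le
    _ = G.degree u - 1 := by rw [Finset.card_erase_of_mem hv]; rfl
  -- inc as the set from the hypothesis
  have hinc_set : ∀ {y : V} (hy : y ≠ v),
      (↑(inc y) : Set (Fin (k + 7))) =
        {c | ∃ u, (G.induce ({v}ᶜ : Set V)).Adj u ⟨y, hmemc hy⟩ ∧ φ₀ u ⟨y, hmemc hy⟩ = c} := by
    intro y hy
    ext col
    simp only [Finset.coe_image, Set.mem_image, Finset.mem_coe, Finset.mem_erase,
      SimpleGraph.mem_neighborFinset, Set.mem_setOf_eq, inc]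
    constructor
    · rintro ⟨x, ⟨hxv, hxy⟩, rfl⟩
      exact ⟨⟨x, hmemc hxv⟩, hxy.symm, (hold hxv hy).symm⟩
    · rintro ⟨⟨x, hx⟩, hadj, rfl⟩
      have hxv : x ≠ v := Set.mem_compl_singleton_iff.mp hx
      have hadj' : G.Adj x y := hadj
      exact ⟨x, ⟨hxv, hadj'.symm⟩, hold hxv hy⟩
  have hinc_card : ∀ {y : V}, y ≠ v → (inc y).card ≤ 7 := by
    intro y hy
    have h := hℓ₀ ⟨y, hmemc hy⟩
    rw [← Set.ncard_coe_finset, hinc_set hy]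
    exact h
  -- neighborhood structure
  have hdeg7 : (G.neighborFinset v).card = 7 := hdv
  obtain ⟨s6, hs6f, hs6card⟩ := Finset.exists_subset_card_eq hnb
  have hs6sub : s6 ⊆ G.neighborFinset v := hs6f.trans (Finset.filter_subset _ _)
  have hs6deg : ∀ i ∈ s6, G.degree i ≤ 5 := by
    intro i hi
    have := hs6f hi
    simp only [Finset.mem_filter] at this
    exact this.2
  have hsdcard : ((G.neighborFinset v) \ s6).card = 1 := by
    rw [Finset.card_sdiff_of_subset hs6sub, hdeg7, hs6card]
  obtain ⟨u7, hu7⟩ := Finset.card_eq_one.mp hsdcard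
  have hu7mem : u7 ∈ G.neighborFinset v := by
    have : u7 ∈ G.neighborFinset v \ s6 := by rw [hu7]; simp
    exact (Finset.mem_sdiff.mp this).1
  have hu7s6 : u7 ∉ s6 := by
    have : u7 ∈ G.neighborFinset v \ s6 := by rw [hu7]; simp
    exact (Finset.mem_sdiff.mp this).2
  have hNv : ∀ a ∈ G.neighborFinset v, a = u7 ∨ a ∈ s6 := by
    intro a ha
    by_cases h : a ∈ s6
    · exact Or.inr h
    · left
      have : a ∈ G.neighborFinset v \ s6 := Finset.mem_sdiff.mpr ⟨ha, h⟩
      rw [hu7] at this; simpa using this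
  have hadjv : ∀ {a : V}, a ∈ G.neighborFinset v → G.Adj v a := by
    intro a ha; exact (SimpleGraph.mem_neighborFinset G v a).mp ha
  have hnev : ∀ {a : V}, a ∈ G.neighborFinset v → a ≠ v := fun ha => (hadjv ha).ne'
  have hvmem : ∀ {a : V}, a ∈ G.neighborFinset v → v ∈ G.neighborFinset a := by
    intro a ha; exact (SimpleGraph.mem_neighborFinset G a v).mpr (hadjv ha).symm
  have hu7v : u7 ≠ v := hnev hu7mem
  have hdegle : ∀ u : V, G.degree u ≤ k := fun u => (G.degree_le_maxDegree u).trans hΔ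
  have hout4 : ∀ i ∈ s6, (out i).card ≤ 4 := by
    intro i hi
    have := hcard_out i (hvmem (hs6sub hi))
    have := hs6deg i hi
    omega
  have hinc4 : ∀ i ∈ s6, (inc i).card ≤ 4 := by
    intro i hi
    have := hcard_inc i (hvmem (hs6sub hi))
    have := hs6deg i hi
    omega
  have hout7 : (out u7).card ≤ k - 1 := by
    have := hcard_out u7 (hvmem hu7mem)
    have := hdegle u7
    omega
  -- membership lemmas
  have hmem_out : ∀ {a x : V}, G.Adj a x → x ≠ v → old a x ∈ out a := by
    intro a x h hx
    exact Finset.mem_image_of_mem _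
      (Finset.mem_erase.mpr ⟨hx, (SimpleGraph.mem_neighborFinset G a x).mpr h⟩)
  have hmem_inc : ∀ {a x : V}, G.Adj a x → x ≠ v → old x a ∈ inc a := by
    intro a x h hx
    exact Finset.mem_image_of_mem _
      (Finset.mem_erase.mpr ⟨hx, (SimpleGraph.mem_neighborFinset G a x).mpr h⟩)
  -- incoming and outgoing colors at u7 are disjoint
  have hdisj : ∀ a ∈ inc u7, a ∉ out u7 := by
    intro a ha hb
    simp only [inc, out, Finset.mem_image, Finset.mem_erase,
      SimpleGraph.mem_neighborFinset] at ha hb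
    obtain ⟨x, ⟨hxv, hxadj⟩, rfl⟩ := ha
    obtain ⟨y, ⟨hyv, hyadj⟩, hy⟩ := hb
    have hxu7 : x ≠ u7 := fun h => G.irrefl (h ▸ hxadj)
    have e1 : (G.induce ({v}ᶜ : Set V)).Adj ⟨x, hmemc hxv⟩ ⟨u7, hmemc hu7v⟩ := hxadj.symm
    have e2 : (G.induce ({v}ᶜ : Set V)).Adj ⟨u7, hmemc hu7v⟩ ⟨y, hmemc hyv⟩ := hyadj
    refine hφ₀ e1 e2 ?_ ?_ ?_
    · intro h
      rw [Prod.ext_iff] at h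
      exact hxu7 (congrArg Subtype.val h.1)
    · exact Or.inr (Or.inr (Or.inl rfl))
    · rw [← hold hxv hu7v, ← hold hu7v hyv, hy]
  -- choice of d7
  obtain ⟨d7, hd7⟩ := fin_exists_notMem (out u7 ∪ inc u7) (by
    have h1 := Finset.card_union_le (out u7) (inc u7)
    have h2 := hinc_card hu7v
    omega)
  have hd7out : d7 ∉ out u7 := fun h => hd7 (Finset.mem_union_left _ h)
  have hd7inc : d7 ∉ inc u7 := fun h => hd7 (Finset.mem_union_right _ h)
  -- choice of c7
  obtain ⟨c7, hc7out, hc7d7, hc7big⟩ :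
      ∃ c7, c7 ∉ out u7 ∧ c7 ≠ d7 ∧ (7 ≤ (inc u7).card → c7 ∈ inc u7) := by
    by_cases hbig : 7 ≤ (inc u7).card
    · have hne : (inc u7).Nonempty := Finset.card_pos.mp (by omega)
      obtain ⟨c7, hc7⟩ := hne
      exact ⟨c7, fun h => hdisj c7 hc7 h, fun h => hd7inc (h ▸ hc7), fun _ => hc7⟩
    · obtain ⟨c7, hc7⟩ := fin_exists_notMem (insert d7 (out u7)) (by
        have := Finset.card_insert_le d7 (out u7)
        omega)
      simp only [Finset.mem_insert, not_or] at hc7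
      exact ⟨c7, hc7.2, hc7.1, fun h => absurd h hbig⟩
  -- sequential choice of the colors c i for i ∈ s6
  obtain ⟨cl, hcl1, hcl2, hcl3⟩ := seq_choice out inc s6.toList ({d7, c7} : Finset (Fin (k + 7)))
    s6.nodup_toList
    (fun i hi => hout4 i (by simpa using hi))
    (by
      have h1 : ({d7, c7} : Finset (Fin (k + 7))).card ≤ 2 :=
        (Finset.card_insert_le _ _).trans (by simp)
      have h2 : s6.toList.length = 6 := by rw [Finset.length_toList, hs6card]
      omega)
  have hclmem : ∀ i ∈ s6, cl i ∉ out i ∧ cl i ≠ d7 ∧ cl i ≠ c7 := by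
    intro i hi
    have h := hcl1 i (by simpa using hi)
    refine ⟨h.1, ?_, ?_⟩
    · intro he; exact h.2 (by simp [he])
    · intro he; exact h.2 (by simp [he])
  let c : V → Fin (k + 7) := Function.update cl u7 c7
  have hcu7 : c u7 = c7 := Function.update_self _ _ _
  have hcs6 : ∀ i ∈ s6, c i = cl i := by
    intro i hi
    have hiu : i ≠ u7 := fun h => hu7s6 (h ▸ hi)
    exact Function.update_of_ne hiu _ _
  let Cfull : Finset (Fin (k + 7)) := (G.neighborFinset v).image c
  have hCcard : Cfull.card ≤ 7 := (Finset.card_image_le).trans (by rw [hdeg7])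
  have hCmem : ∀ b ∈ G.neighborFinset v, c b ∈ Cfull := fun b hb => Finset.mem_image_of_mem c hb
  have hc_out : ∀ b ∈ G.neighborFinset v, c b ∉ out b := by
    intro b hb
    rcases hNv b hb with rfl | hb6
    · rw [hcu7]; exact hc7out
    · rw [hcs6 b hb6]; exact (hclmem b hb6).1
  have hclpair : ∀ a ∈ s6, ∀ b ∈ s6, a ≠ b → cl a ≠ cl b := by
    intro a ha b hb hab
    haveI : Std.Symm (fun a b : V => cl a ≠ cl b) := ⟨fun _ _ h => Ne.symm h⟩
    exact List.Pairwise.forall hcl2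
      (by simpa using ha) (by simpa using hb) hab
  have hc_inj : ∀ b ∈ G.neighborFinset v, ∀ x ∈ G.neighborFinset v, b ≠ x → c b ≠ c x := by
    intro b hb x hx hbx
    rcases hNv b hb with rfl | hb6 <;> rcases hNv x hx with rfl | hx6
    · exact absurd rfl hbx
    · rw [hcu7, hcs6 x hx6]; exact fun h => (hclmem x hx6).2.2 h.symm
    · rw [hcu7, hcs6 b hb6]; exact (hclmem b hb6).2.2
    · rw [hcs6 b hb6, hcs6 x hx6]; exact hclpair b hb6 x hx6 hbx
  -- choice of d i for i ∈ s6
  have hd_ex : ∀ i : V, ∃ col : Fin (k + 7),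
      i ∈ s6 → (col ∉ out i ∧ col ∉ inc i ∧ col ∉ Cfull) := by
    intro i
    by_cases hi : i ∈ s6
    · have hbound : (out i ∪ inc i ∪ Cfull).card < k + 7 := by
        rcases hcl3 i (by simpa using hi) with hc | hc
        · -- cl i ∈ inc i ∩ Cfull, saving one color
          have hciC : c i ∈ Cfull := hCmem i (hs6sub hi)
          have hsub : out i ∪ inc i ∪ Cfull ⊆ out i ∪ (inc i).erase (c i) ∪ Cfull := by
            intro x hx
            simp only [Finset.mem_union, Finset.mem_erase] at hx ⊢
            rcases hx with (hx | hx) | hx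
            · tauto
            · by_cases hxc : x = c i
              · exact Or.inr (hxc ▸ hciC)
              · tauto
            · tauto
          have h1 := Finset.card_le_card hsub
          have h2 : (out i ∪ (inc i).erase (c i) ∪ Cfull).card ≤
              (out i).card + ((inc i).erase (c i)).card + Cfull.card := by
            have ha := Finset.card_union_le (out i ∪ (inc i).erase (c i)) Cfull
            have hb := Finset.card_union_le (out i) ((inc i).erase (c i))
            omega
          have h3 : ((inc i).erase (c i)).card ≤ 3 := by
            rw [Finset.card_erase_of_mem (by rw [hcs6 i hi]; exact hc)]
            have := hinc4 i hi
            omega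
          have h4 := hout4 i hi
          omega
        · -- inc i is contained in already-used colors
          have hsub : out i ∪ inc i ∪ Cfull ⊆ out i ∪ insert d7 Cfull := by
            intro x hx
            simp only [Finset.mem_union, Finset.mem_insert] at hx ⊢
            rcases hx with (hx | hx) | hx
            · tauto
            · have := hc hx
              simp only [Finset.mem_union, Finset.mem_insert, Finset.mem_singleton,
                Finset.mem_image, List.mem_toFinset, Finset.mem_toList] at this
              rcases this with (hx' | (hx' | hx')) | ⟨j, hj, hjx⟩
              · tauto
              · tauto
              · exact Or.inr (Or.inr (hx' ▸ (hcu7 ▸ hCmem u7 hu7mem)))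
              · refine Or.inr (Or.inr ?_)
                rw [← hjx, ← hcs6 j hj]
                exact hCmem j (hs6sub hj)
            · tauto
          have h1 := Finset.card_le_card hsub
          have h2 := Finset.card_union_le (out i) (insert d7 Cfull)
          have h3 := Finset.card_insert_le d7 Cfull
          have h4 := hout4 i hi
          omega
      obtain ⟨col, hcol⟩ := fin_exists_notMem _ hbound
      simp only [Finset.mem_union, not_or] at hcol
      exact ⟨col, fun _ => ⟨hcol.1.1, hcol.1.2, hcol.2⟩⟩
    · exact ⟨⟨0, by omega⟩, fun h => absurd h hi⟩
  choose d hd using hd_ex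
  let dfun : V → Fin (k + 7) := fun i => if i = u7 then d7 else d i
  have hdf_u7 : dfun u7 = d7 := by simp [dfun]
  have hdf_s6 : ∀ i ∈ s6, dfun i = d i := by
    intro i hi
    simp only [dfun, if_neg (fun h : i = u7 => hu7s6 (h ▸ hi))]
  have hd_out : ∀ a ∈ G.neighborFinset v, dfun a ∉ out a := by
    intro a ha
    rcases hNv a ha with rfl | ha6
    · rw [hdf_u7]; exact hd7out
    · rw [hdf_s6 a ha6]; exact (hd a ha6).1
  have hd_inc : ∀ a ∈ G.neighborFinset v, dfun a ∉ inc a := by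
    intro a ha
    rcases hNv a ha with rfl | ha6
    · rw [hdf_u7]; exact hd7inc
    · rw [hdf_s6 a ha6]; exact (hd a ha6).2.1
  have hd_c : ∀ a ∈ G.neighborFinset v, ∀ b ∈ G.neighborFinset v, dfun a ≠ c b := by
    intro a ha b hb
    rcases hNv a ha with rfl | ha6
    · rw [hdf_u7]
      rcases hNv b hb with rfl | hb6
      · rw [hcu7]; exact fun h => hc7d7 h.symm
      · rw [hcs6 b hb6]; exact fun h => (hclmem b hb6).2.1 h.symm
    · rw [hdf_s6 a ha6]
      exact fun h => (hd a ha6).2.2 (h ▸ hCmem b hb)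
  -- the extended coloring
  let φ' : V → V → Fin (k + 7) := fun a b =>
    if a = v then c b else if b = v then dfun a else old a b
  have hpv : ∀ b, φ' v b = c b := fun b => by simp [φ']
  have hpdv : ∀ {a : V}, a ≠ v → φ' a v = dfun a := by
    intro a ha; simp [φ', ha]
  have hpold : ∀ {a b : V}, a ≠ v → b ≠ v → φ' a b = old a b := by
    intro a b ha hb; simp [φ', ha, hb]
  refine ⟨φ', ?_, ?_⟩
  · -- it is an incidence coloring
    intro a b w x h1 h2 hne hcond
    by_cases hav : a = v
    · subst a
      have hbmem : b ∈ G.neighborFinset v := (G.mem_neighborFinset v b).mpr h1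
      have hbv : b ≠ v := h1.ne'
      by_cases hwv : w = v
      · subst w
        have hxmem : x ∈ G.neighborFinset v := (G.mem_neighborFinset v x).mpr h2
        have hbx : b ≠ x := fun h => hne (by rw [h])
        rw [hpv, hpv]
        exact hc_inj b hbmem x hxmem hbx
      · by_cases hxv : x = v
        · subst x
          have hwmem : w ∈ G.neighborFinset v := (G.mem_neighborFinset v w).mpr h2.symm
          rw [hpv, hpdv hwv]
          exact fun h => hd_c w hwmem b hbmem h.symm
        · have hwb : w = b := by
            rcases hcond with h | h | h | h
            · exact absurd h.symm hwv
            · rw [Sym2.eq_iff] at h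
              rcases h with ⟨h', -⟩ | ⟨h', -⟩
              · exact absurd h'.symm hwv
              · exact absurd h'.symm hxv
            · rw [Sym2.eq_iff] at h
              rcases h with ⟨-, h'⟩ | ⟨h', -⟩
              · exact h'
              · exact absurd h'.symm hbv
            · rw [Sym2.eq_iff] at h
              rcases h with ⟨h', -⟩ | ⟨h', -⟩
              · exact absurd h'.symm hwv
              · exact absurd h'.symm hxv
          subst w
          rw [hpv, hpold hbv hxv]
          exact fun h => hc_out b hbmem (by rw [h]; exact hmem_out h2 hxv)
    · by_cases hbv : b = v
      · subst b
        have hamem : a ∈ G.neighborFinset v := (G.mem_neighborFinset v a).mpr h1.symm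
        by_cases hwv : w = v
        · subst w
          have hxmem : x ∈ G.neighborFinset v := (G.mem_neighborFinset v x).mpr h2
          rw [hpdv hav, hpv]
          exact hd_c a hamem x hxmem
        · by_cases hxv : x = v
          · subst x
            exfalso
            have haw : a ≠ w := fun h => hne (by rw [h])
            rcases hcond with h | h | h | h
            · exact haw h
            · rw [Sym2.eq_iff] at h
              rcases h with ⟨h', -⟩ | ⟨h', -⟩
              · exact haw h'
              · exact hav h'
            · rw [Sym2.eq_iff] at h
              rcases h with ⟨-, h'⟩ | ⟨h', -⟩
              · exact hwv h'
              · exact hav h'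
            · rw [Sym2.eq_iff] at h
              rcases h with ⟨-, h'⟩ | ⟨h', -⟩
              · exact hwv h'
              · exact hav h'
          · rcases hcond with h | h | h | h
            · subst w
              rw [hpdv hav, hpold hav hxv]
              exact fun h => hd_out a hamem (by rw [h]; exact hmem_out h2 hxv)
            · exfalso
              rw [Sym2.eq_iff] at h
              rcases h with ⟨-, h'⟩ | ⟨-, h'⟩
              · exact hxv h'.symm
              · exact hwv h'.symm
            · exfalso
              rw [Sym2.eq_iff] at h
              rcases h with ⟨-, h'⟩ | ⟨h', -⟩
              · exact hwv h'
              · exact hav h'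
            · rw [Sym2.eq_iff] at h
              rcases h with ⟨-, h'⟩ | ⟨h', -⟩
              · exact absurd h' h2.ne
              · subst x
                rw [hpdv hav, hpold hwv hav]
                exact fun h => hd_inc a hamem (by rw [h]; exact hmem_inc h2.symm hwv)
      · by_cases hwv : w = v
        · subst w
          have hxmem : x ∈ G.neighborFinset v := (G.mem_neighborFinset v x).mpr h2
          have hax : a = x := by
            rcases hcond with h | h | h | h
            · exact absurd h hav
            · rw [Sym2.eq_iff] at h
              rcases h with ⟨h', -⟩ | ⟨-, h'⟩
              · exact absurd h' hav
              · exact absurd h' hbv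
            · rw [Sym2.eq_iff] at h
              rcases h with ⟨-, h'⟩ | ⟨-, h'⟩
              · exact absurd h'.symm hbv
              · exact absurd h'.symm hav
            · rw [Sym2.eq_iff] at h
              rcases h with ⟨h', -⟩ | ⟨h', -⟩
              · exact absurd h' hav
              · exact h'
          subst x
          rw [hpv, hpold hav hbv]
          exact fun h => hc_out a hxmem (by rw [← h]; exact hmem_out h1 hbv)
        · by_cases hxv : x = v
          · subst x
            have hwmem : w ∈ G.neighborFinset v := (G.mem_neighborFinset v w).mpr h2.symm
            rcases hcond with h | h | h | h
            · subst w
              rw [hpold hav hbv, hpdv hav]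
              exact fun h => hd_out a hwmem (by rw [← h]; exact hmem_out h1 hbv)
            · exfalso
              rw [Sym2.eq_iff] at h
              rcases h with ⟨-, h'⟩ | ⟨h', -⟩
              · exact hbv h'
              · exact hav h'
            · rw [Sym2.eq_iff] at h
              rcases h with ⟨-, h'⟩ | ⟨h', -⟩
              · subst w
                rw [hpold hav hbv, hpdv hbv]
                exact fun h => hd_inc b hwmem (by rw [← h]; exact hmem_inc h1.symm hav)
              · exact absurd h' h1.ne
            · exfalso
              rw [Sym2.eq_iff] at h
              rcases h with ⟨-, h'⟩ | ⟨h', -⟩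
              · exact hwv h'
              · exact hav h'
          · -- all four vertices differ from v : use the old coloring
            have e1 : (G.induce ({v}ᶜ : Set V)).Adj ⟨a, hmemc hav⟩ ⟨b, hmemc hbv⟩ := h1
            have e2 : (G.induce ({v}ᶜ : Set V)).Adj ⟨w, hmemc hwv⟩ ⟨x, hmemc hxv⟩ := h2
            rw [hpold hav hbv, hpold hwv hxv, hold hav hbv, hold hwv hxv]
            refine hφ₀ e1 e2 ?_ ?_
            · intro h
              rw [Prod.ext_iff] at h
              exact hne (Prod.ext_iff.mpr
                ⟨congrArg Subtype.val h.1, congrArg Subtype.val h.2⟩)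
            · rcases hcond with h | h | h | h
              · exact Or.inl (Subtype.ext h)
              · refine Or.inr (Or.inl ?_)
                rw [Sym2.eq_iff] at h ⊢
                simpa only [Subtype.mk.injEq] using h
              · refine Or.inr (Or.inr (Or.inl ?_))
                rw [Sym2.eq_iff] at h ⊢
                simpa only [Subtype.mk.injEq] using h
              · refine Or.inr (Or.inr (Or.inr ?_))
                rw [Sym2.eq_iff] at h ⊢
                simpa only [Subtype.mk.injEq] using h
  · -- the (·, 7) condition
    intro y
    have hset : {col : Fin (k + 7) | ∃ u : V, G.Adj u y ∧ φ' u y = col} =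
        ↑((G.neighborFinset y).image (fun u => φ' u y)) := by
      ext col
      simp only [Set.mem_setOf_eq, Finset.coe_image, Set.mem_image, Finset.mem_coe,
        SimpleGraph.mem_neighborFinset]
      constructor
      · rintro ⟨u, hu, rfl⟩; exact ⟨u, hu.symm, rfl⟩
      · rintro ⟨u, hu, rfl⟩; exact ⟨u, hu.symm, rfl⟩
    rw [hset, Set.ncard_coe_finset]
    by_cases hyv : y = v
    · subst y
      exact Finset.card_image_le.trans (by rw [hdeg7])
    by_cases hy6 : y ∈ s6
    · refine Finset.card_image_le.trans ?_
      have := hs6deg y hy6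
      have : (G.neighborFinset y).card = G.degree y := rfl
      omega
    by_cases hynf : y ∈ G.neighborFinset v
    · -- y = u7
      have hy7 : y = u7 := by rcases hNv y hynf with h | h; exacts [h, absurd h hy6]
      subst y
      have hsub : (G.neighborFinset u7).image (fun u => φ' u u7) ⊆ insert c7 (inc u7) := by
        intro col hcol
        simp only [Finset.mem_image, SimpleGraph.mem_neighborFinset] at hcol
        obtain ⟨u, hu, rfl⟩ := hcol
        by_cases huv : u = v
        · subst u
          rw [hpv, hcu7]
          exact Finset.mem_insert_self _ _
        · rw [hpold huv hu7v]
          exact Finset.mem_insert_of_mem (hmem_inc hu huv)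
      refine (Finset.card_le_card hsub).trans ?_
      by_cases hbig : 7 ≤ (inc u7).card
      · rw [Finset.insert_eq_self.mpr (hc7big hbig)]
        exact hinc_card hu7v
      · have := Finset.card_insert_le c7 (inc u7)
        omega
    · -- y is not a neighbor of v
      have hsub : (G.neighborFinset y).image (fun u => φ' u y) ⊆ inc y := by
        intro col hcol
        simp only [Finset.mem_image, SimpleGraph.mem_neighborFinset] at hcol
        obtain ⟨u, hu, rfl⟩ := hcol
        have huv : u ≠ v := by
          intro h
          subst u
          exact hynf ((G.mem_neighborFinset v y).mpr hu.symm)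
        rw [hpold huv hyv]
        exact hmem_inc hu huv
      exact (Finset.card_le_card hsub).trans (hinc_card hyv)
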